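/- Let (X,d) be a metric space, f : X → X a map, ε > 0, and let B₁, …, B_m be subsets of X with union 𝓑 = B₁ ∪ … ∪ B_m. Let E ⊆ {1,…,m} × {1,…,m} be a set of directed edges such that whenever there exist points x ∈ B_k and y ∈ B_j with d(f(x), y) < ε, then (k,j) ∈ E. Suppose x ∈ 𝓑 admits an ε-chain from x to x all of whose points lie in 𝓑. Then there exists an index k with x ∈ B_k such that k lies on a directed cycle of E. -/
import Mathlib


/-- The index `k` lies on a directed cycle of the edge set `E`. -/
def OnCycle {m : ℕ} (E : Set (Fin m × Fin m)) (k : Fin m) : Prop :=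
  ∃ s : ℕ, 1 ≤ s ∧ ∃ c : ℕ → Fin m, c 0 = k ∧ c s = k ∧ ∀ i < s, (c i, c (i + 1)) ∈ E

/-- soundness of the box chain model.  If the edge set `E` contains an edge
`(k,j)` whenever some `x ∈ B k` and `y ∈ B j` satisfy `dist (f x) y < ε`, and `x ∈ 𝓑`
admits an ε-chain from `x` to `x` all of whose points lie in `𝓑 = ⋃ B i`, then `x` lies
in some box `B k` whose index `k` lies on a directed cycle of `E`. -/
theorem stmt_7 {X : Type*} [MetricSpace X] (f : X → X) (ε : ℝ)
    (m : ℕ) (B : Fin m → Set X) (E : Set (Fin m × Fin m))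
    (hE : ∀ k j : Fin m, (∃ x ∈ B k, ∃ y ∈ B j, dist (f x) y < ε) → (k, j) ∈ E)
    (x : X) (hx : x ∈ ⋃ i, B i)
    (hchain : ∃ n : ℕ, 1 ≤ n ∧ ∃ c : ℕ → X, c 0 = x ∧ c n = x ∧
      (∀ k ≤ n, c k ∈ ⋃ i, B i) ∧ ∀ k < n, dist (f (c k)) (c (k + 1)) < ε) :
    ∃ k : Fin m, x ∈ B k ∧ OnCycle E k := by
  obtain ⟨n, hn, c, hc0, hcn, hmem, hstep⟩ := hchain
  obtain ⟨i0, hi0⟩ : ∃ i, x ∈ B i := Set.mem_iUnion.mp hx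
  have hex : ∀ k : ℕ, ∃ i : Fin m, k ≤ n → c k ∈ B i := by
    intro k
    by_cases h : k ≤ n
    · obtain ⟨i, hi⟩ := Set.mem_iUnion.mp (hmem k h)
      exact ⟨i, fun _ => hi⟩
    · exact ⟨i0, fun h' => absurd h' h⟩
  choose g hg using hex
  set b : ℕ → Fin m := fun k => if k = 0 ∨ k = n then i0 else g k with hb
  have hbmem : ∀ k ≤ n, c k ∈ B (b k) := by
    intro k hk
    by_cases h : k = 0 ∨ k = n
    · rcases h with h | h <;> simp only [hb, h, if_pos, or_true, true_or] <;>
        simp [h, hc0, hcn, hi0]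
    · simpa [hb, h] using hg k hk
  refine ⟨i0, hi0, n, hn, b, by simp [hb], by simp [hb], ?_⟩
  intro i hi
  exact hE _ _ ⟨c i, hbmem i hi.le, c (i + 1), hbmem (i + 1) hi, hstep i hi⟩
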